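/- Let 𝒯 be a monoid of transformations of a nonempty set X, let 𝒦 be a 𝒯-invariant set of gambles on X (f ∈ 𝒦 and T ∈ 𝒯 imply f∘T ∈ 𝒦), and let L : 𝒦 → ℝ be a weakly 𝒯-invariant lower prevision (L(f∘T) ≥ L(f) for all f ∈ 𝒦, T ∈ 𝒯) that avoids sure loss. Then the natural extension E_L of L satisfies E_L(f∘T) ≥ E_L(f) for every gamble f on X and every T ∈ 𝒯; consequently E_L is the point-wise smallest coherent lower prevision on all gambles that is weakly 𝒯-invariant and dominates L on 𝒦. -/
import Mathlib


def IsGamble {X : Type*} (f : X → ℝ) : Prop :=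
  BddAbove (Set.range f) ∧ BddBelow (Set.range f)

def IsCoherentLowerPrevision {X : Type*} (L : (X → ℝ) → ℝ) : Prop :=
  (∀ f : X → ℝ, IsGamble f → sInf (Set.range f) ≤ L f) ∧
  (∀ f g : X → ℝ, IsGamble f → IsGamble g → L f + L g ≤ L (f + g)) ∧
  (∀ f : X → ℝ, IsGamble f → ∀ c : ℝ, 0 ≤ c → L (c • f) = c * L f)

def IsCoherentPrevision {X : Type*} (P : (X → ℝ) → ℝ) : Prop :=
  (∀ f g : X → ℝ, IsGamble f → IsGamble g → P (f + g) = P f + P g) ∧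
  (∀ f : X → ℝ, IsGamble f → sInf (Set.range f) ≤ P f)

def IsTransformationMonoid {X : Type*} (𝒯 : Set (X → X)) : Prop :=
  id ∈ 𝒯 ∧ ∀ S ∈ 𝒯, ∀ T ∈ 𝒯, S ∘ T ∈ 𝒯

def Dominating {X : Type*} (L : (X → ℝ) → ℝ) : Set ((X → ℝ) → ℝ) :=
  {P | IsCoherentPrevision P ∧ ∀ f : X → ℝ, IsGamble f → L f ≤ P f}

def AvoidsSureLoss {X : Type*} (𝒦 : Set (X → ℝ)) (L : (X → ℝ) → ℝ) : Prop :=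
  ∀ (n : ℕ) (lam : Fin n → ℝ) (fs : Fin n → X → ℝ),
    (∀ k, 0 ≤ lam k) → (∀ k, fs k ∈ 𝒦) →
    0 ≤ ⨆ x : X, ∑ k, lam k * (fs k x - L (fs k))

noncomputable def NatExt {X : Type*} (𝒦 : Set (X → ℝ)) (L : (X → ℝ) → ℝ)
    (g : X → ℝ) : ℝ :=
  sSup {α : ℝ | ∃ (n : ℕ) (lam : Fin n → ℝ) (fs : Fin n → X → ℝ),
    (∀ k, 0 ≤ lam k) ∧ (∀ k, fs k ∈ 𝒦) ∧
    α = ⨅ x : X, (g x - ∑ k, lam k * (fs k x - L (fs k)))}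

open Set

/-! ### Auxiliary lemmas -/

lemma isGamble_iff {X : Type*} (f : X → ℝ) :
    IsGamble f ↔ ∃ C, ∀ x, |f x| ≤ C := by
  constructor
  · rintro ⟨⟨a, ha⟩, ⟨b, hb⟩⟩
    refine ⟨max |a| |b|, fun x => abs_le.2 ⟨?_, ?_⟩⟩
    · have h1 : b ≤ f x := hb (mem_range_self x)
      have h2 : -|b| ≤ b := neg_abs_le b
      have h3 : -max |a| |b| ≤ -|b| := by simp [le_max_right]
      linarith
    · have h1 : f x ≤ a := ha (mem_range_self x)
      have h2 : a ≤ |a| := le_abs_self a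
      have h3 : |a| ≤ max |a| |b| := le_max_left _ _
      linarith
  · rintro ⟨C, hC⟩
    exact ⟨⟨C, by rintro y ⟨x, rfl⟩; exact (abs_le.1 (hC x)).2⟩,
      ⟨-C, by rintro y ⟨x, rfl⟩; exact (abs_le.1 (hC x)).1⟩⟩

/-- The set whose supremum defines the natural extension. -/
def NESet {X : Type*} (𝒦 : Set (X → ℝ)) (L : (X → ℝ) → ℝ) (g : X → ℝ) : Set ℝ :=
  {α : ℝ | ∃ (n : ℕ) (lam : Fin n → ℝ) (fs : Fin n → X → ℝ),
    (∀ k, 0 ≤ lam k) ∧ (∀ k, fs k ∈ 𝒦) ∧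
    α = ⨅ x : X, (g x - ∑ k, lam k * (fs k x - L (fs k)))}

lemma natExt_eq {X : Type*} (𝒦 : Set (X → ℝ)) (L : (X → ℝ) → ℝ) (g : X → ℝ) :
    NatExt 𝒦 L g = sSup (NESet 𝒦 L g) := rfl

/-- The integrand function is a gamble. -/
lemma isGamble_integrand {X : Type*} {g : X → ℝ} (hg : IsGamble g) {n : ℕ}
    (lam : Fin n → ℝ) (fs : Fin n → X → ℝ) (hfs : ∀ k, IsGamble (fs k)) (c : Fin n → ℝ) :
    IsGamble (fun x => g x - ∑ k, lam k * (fs k x - c k)) := by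
  rw [isGamble_iff]
  obtain ⟨Cg, hCg⟩ := (isGamble_iff g).1 hg
  choose C hC using fun k => (isGamble_iff (fs k)).1 (hfs k)
  refine ⟨Cg + ∑ k, |lam k| * (C k + |c k|), fun x => ?_⟩
  calc |g x - ∑ k, lam k * (fs k x - c k)|
      ≤ |g x| + |∑ k, lam k * (fs k x - c k)| := abs_sub _ _
    _ ≤ Cg + ∑ k, |lam k| * (C k + |c k|) := by
        refine add_le_add (hCg x) ?_
        calc |∑ k, lam k * (fs k x - c k)| ≤ ∑ k, |lam k * (fs k x - c k)| :=
              Finset.abs_sum_le_sum_abs _ _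
          _ ≤ ∑ k, |lam k| * (C k + |c k|) := by
              refine Finset.sum_le_sum fun k _ => ?_
              rw [abs_mul]
              refine mul_le_mul_of_nonneg_left ?_ (abs_nonneg _)
              calc |fs k x - c k| ≤ |fs k x| + |c k| := abs_sub _ _
                _ ≤ C k + |c k| := by linarith [hC k x]

lemma sInf_mem_NESet {X : Type*} [Nonempty X] (𝒦 : Set (X → ℝ)) (L : (X → ℝ) → ℝ)
    (g : X → ℝ) : sInf (range g) ∈ NESet 𝒦 L g := by
  refine ⟨0, fun k => k.elim0, fun k => k.elim0, fun k => k.elim0, fun k => k.elim0, ?_⟩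
  simp only [Fin.sum_univ_zero, sub_zero]
  exact sInf_range.symm

lemma NESet_le {X : Type*} [Nonempty X] {𝒦 : Set (X → ℝ)} {L : (X → ℝ) → ℝ}
    (h𝒦g : ∀ f ∈ 𝒦, IsGamble f) (hasl : AvoidsSureLoss 𝒦 L)
    {g : X → ℝ} (hg : IsGamble g) {α : ℝ} (hα : α ∈ NESet 𝒦 L g) :
    α ≤ sSup (range g) := by
  obtain ⟨n, lam, fs, hl, hfK, rfl⟩ := hα
  have hint := isGamble_integrand hg lam fs (fun k => h𝒦g _ (hfK k)) (fun k => L (fs k))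
  have hsup : 0 ≤ ⨆ x : X, ∑ k, lam k * (fs k x - L (fs k)) := hasl n lam fs hl hfK
  set β := ⨅ x : X, (g x - ∑ k, lam k * (fs k x - L (fs k))) with hβ
  have key : (⨆ x : X, ∑ k, lam k * (fs k x - L (fs k))) ≤ sSup (range g) - β := by
    refine ciSup_le fun x => ?_
    have h1 : β ≤ g x - ∑ k, lam k * (fs k x - L (fs k)) := ciInf_le hint.2 x
    have h2 : g x ≤ sSup (range g) := le_csSup hg.1 (mem_range_self x)
    linarith
  linarith

lemma bddAbove_NESet {X : Type*} [Nonempty X] {𝒦 : Set (X → ℝ)} {L : (X → ℝ) → ℝ}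
    (h𝒦g : ∀ f ∈ 𝒦, IsGamble f) (hasl : AvoidsSureLoss 𝒦 L)
    {g : X → ℝ} (hg : IsGamble g) : BddAbove (NESet 𝒦 L g) :=
  ⟨sSup (range g), fun _ hα => NESet_le h𝒦g hasl hg hα⟩

lemma isGamble_comp {X : Type*} {f : X → ℝ} (hf : IsGamble f) (T : X → X) :
    IsGamble (f ∘ T) := by
  rw [isGamble_iff] at hf ⊢
  obtain ⟨C, hC⟩ := hf
  exact ⟨C, fun x => hC (T x)⟩

lemma isGamble_const {X : Type*} (c : ℝ) : IsGamble (fun _ : X => c) := by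
  rw [isGamble_iff]; exact ⟨|c|, fun _ => le_rfl⟩

lemma isGamble_smul {X : Type*} (c : ℝ) {f : X → ℝ} (hf : IsGamble f) :
    IsGamble (c • f) := by
  rw [isGamble_iff] at hf ⊢
  obtain ⟨C, hC⟩ := hf
  refine ⟨|c| * C, fun x => ?_⟩
  have : |c • f x| = |c| * |f x| := by simp [abs_mul]
  calc |(c • f) x| = |c| * |f x| := by simp [abs_mul]
    _ ≤ |c| * C := mul_le_mul_of_nonneg_left (hC x) (abs_nonneg _)

lemma isGamble_sum {X ι : Type*} [Fintype ι] {h : ι → X → ℝ}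
    (hh : ∀ k, IsGamble (h k)) (s : Finset ι) : IsGamble (∑ k ∈ s, h k) := by
  choose C hC using fun k => (isGamble_iff (h k)).1 (hh k)
  rw [isGamble_iff]
  refine ⟨∑ k ∈ s, C k, fun x => ?_⟩
  rw [Finset.sum_apply]
  calc |∑ k ∈ s, h k x| ≤ ∑ k ∈ s, |h k x| := Finset.abs_sum_le_sum_abs _ _
    _ ≤ ∑ k ∈ s, C k := Finset.sum_le_sum fun k _ => hC k x

lemma isGamble_sub {X : Type*} {f g : X → ℝ} (hf : IsGamble f) (hg : IsGamble g) :
    IsGamble (f - g) := by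
  rw [isGamble_iff] at hf hg ⊢
  obtain ⟨C, hC⟩ := hf; obtain ⟨D, hD⟩ := hg
  refine ⟨C + D, fun x => ?_⟩
  calc |(f - g) x| = |f x - g x| := rfl
    _ ≤ |f x| + |g x| := abs_sub _ _
    _ ≤ C + D := add_le_add (hC x) (hD x)

lemma isGamble_add {X : Type*} {f g : X → ℝ} (hf : IsGamble f) (hg : IsGamble g) :
    IsGamble (f + g) := by
  rw [isGamble_iff] at hf hg ⊢
  obtain ⟨C, hC⟩ := hf; obtain ⟨D, hD⟩ := hg
  refine ⟨C + D, fun x => ?_⟩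
  calc |(f + g) x| = |f x + g x| := rfl
    _ ≤ |f x| + |g x| := abs_add_le _ _
    _ ≤ C + D := add_le_add (hC x) (hD x)

lemma sInf_range_const {X : Type*} [Nonempty X] (c : ℝ) :
    sInf (range (fun _ : X => c)) = c := by
  rw [range_const, csInf_singleton]

/-- Superadditivity over a finite family for a coherent lower prevision. -/
lemma clp_sum_le {X : Type*} [Nonempty X] {M : (X → ℝ) → ℝ}
    (hM : IsCoherentLowerPrevision M) {ι : Type*} [Fintype ι]
    (lam : ι → ℝ) (gs : ι → X → ℝ) (hlam : ∀ k, 0 ≤ lam k)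
    (hgs : ∀ k, IsGamble (gs k)) (s : Finset ι) :
    ∑ k ∈ s, lam k * M (gs k) ≤ M (∑ k ∈ s, lam k • gs k) := by
  obtain ⟨hM1, hM2, hM3⟩ := hM
  induction s using Finset.cons_induction with
  | empty =>
      simp only [Finset.sum_empty]
      have h0 : sInf (range (0 : X → ℝ)) ≤ M 0 := hM1 0 (isGamble_const 0)
      have : sInf (range (0 : X → ℝ)) = 0 := by
        have : (range (0 : X → ℝ)) = {0} := by
          ext y; simp [eq_comm]
        rw [this, csInf_singleton]
      linarith
  | cons a t ha ih =>
      rw [Finset.sum_cons, Finset.sum_cons]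
      have hA : IsGamble (lam a • gs a) := isGamble_smul _ (hgs a)
      have hB : IsGamble (∑ k ∈ t, lam k • gs k) :=
        isGamble_sum (fun k => isGamble_smul _ (hgs k)) t
      have h1 := hM2 _ _ hA hB
      have h2 : M (lam a • gs a) = lam a * M (gs a) := hM3 (gs a) (hgs a) (lam a) (hlam a)
      linarith

theorem stmt6 (X : Type*) [Nonempty X] (𝒯 : Set (X → X))
    (h𝒯 : IsTransformationMonoid 𝒯)
    (𝒦 : Set (X → ℝ)) (h𝒦g : ∀ f ∈ 𝒦, IsGamble f)
    (h𝒦T : ∀ f ∈ 𝒦, ∀ T ∈ 𝒯, f ∘ T ∈ 𝒦)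
    (L : (X → ℝ) → ℝ) (hweak : ∀ f ∈ 𝒦, ∀ T ∈ 𝒯, L f ≤ L (f ∘ T))
    (hasl : AvoidsSureLoss 𝒦 L) :
    (∀ f : X → ℝ, IsGamble f → ∀ T ∈ 𝒯, NatExt 𝒦 L f ≤ NatExt 𝒦 L (f ∘ T)) ∧
    IsCoherentLowerPrevision (NatExt 𝒦 L) ∧
    (∀ f ∈ 𝒦, L f ≤ NatExt 𝒦 L f) ∧
    (∀ M : (X → ℝ) → ℝ, IsCoherentLowerPrevision M →
      (∀ f : X → ℝ, IsGamble f → ∀ T ∈ 𝒯, M f ≤ M (f ∘ T)) →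
      (∀ f ∈ 𝒦, L f ≤ M f) →
      ∀ f : X → ℝ, IsGamble f → NatExt 𝒦 L f ≤ M f) := by
  -- key: membership gives lower bound on NatExt
  have hKgamble : ∀ k ∈ 𝒦, IsGamble k := h𝒦g
  have hmem_le : ∀ (g : X → ℝ), IsGamble g → ∀ α ∈ NESet 𝒦 L g, α ≤ NatExt 𝒦 L g := by
    intro g hg α hα
    exact le_csSup (bddAbove_NESet h𝒦g hasl hg) hα
  have hne : ∀ g : X → ℝ, (NESet 𝒦 L g).Nonempty :=
    fun g => ⟨_, sInf_mem_NESet 𝒦 L g⟩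
  -- Part 1: weak invariance
  have part1 : ∀ f : X → ℝ, IsGamble f → ∀ T ∈ 𝒯, NatExt 𝒦 L f ≤ NatExt 𝒦 L (f ∘ T) := by
    intro f hf T hT
    rw [natExt_eq]
    refine csSup_le (hne f) fun α hα => ?_
    obtain ⟨n, lam, fs, hl, hfK, rfl⟩ := hα
    have hint := isGamble_integrand hf lam fs (fun k => h𝒦g _ (hfK k)) (fun k => L (fs k))
    set β := ⨅ x : X, (f x - ∑ k, lam k * (fs k x - L (fs k))) with hβ
    have hmem : (⨅ x : X, ((f ∘ T) x - ∑ k, lam k * ((fs k ∘ T) x - L (fs k ∘ T))))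
        ∈ NESet 𝒦 L (f ∘ T) :=
      ⟨n, lam, fun k => fs k ∘ T, hl, fun k => h𝒦T _ (hfK k) T hT, rfl⟩
    refine le_trans ?_ (hmem_le (f ∘ T) (isGamble_comp hf T) _ hmem)
    refine le_ciInf fun x => ?_
    have h1 : β ≤ f (T x) - ∑ k, lam k * (fs k (T x) - L (fs k)) := ciInf_le hint.2 (T x)
    have h2 : ∑ k, lam k * ((fs k ∘ T) x - L (fs k ∘ T))
        ≤ ∑ k, lam k * (fs k (T x) - L (fs k)) := by
      refine Finset.sum_le_sum fun k _ => ?_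
      have := hweak (fs k) (hfK k) T hT
      have := hl k
      have : fs k (T x) - L (fs k ∘ T) ≤ fs k (T x) - L (fs k) := by
        have := hweak (fs k) (hfK k) T hT; linarith
      exact mul_le_mul_of_nonneg_left this (hl k)
    simp only [Function.comp_apply]
    simp only [Function.comp_apply] at h2
    linarith
  -- Part 3: dominates L on 𝒦
  have part3 : ∀ f ∈ 𝒦, L f ≤ NatExt 𝒦 L f := by
    intro f hf
    have hmem : L f ∈ NESet 𝒦 L f := by
      refine ⟨1, fun _ => 1, fun _ => f, fun _ => zero_le_one, fun _ => hf, ?_⟩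
      simp [ciInf_const]
    exact hmem_le f (h𝒦g f hf) _ hmem
  -- Part 2: coherence
  have coh1 : ∀ f : X → ℝ, IsGamble f → sInf (range f) ≤ NatExt 𝒦 L f := by
    intro f hf
    exact hmem_le f hf _ (sInf_mem_NESet 𝒦 L f)
  have coh2 : ∀ f g : X → ℝ, IsGamble f → IsGamble g →
      NatExt 𝒦 L f + NatExt 𝒦 L g ≤ NatExt 𝒦 L (f + g) := by
    intro f g hf hg
    -- show for all α ∈ NESet f, β ∈ NESet g : α + β ≤ NatExt (f+g)
    have key : ∀ α ∈ NESet 𝒦 L f, ∀ β ∈ NESet 𝒦 L g, α + β ≤ NatExt 𝒦 L (f + g) := by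
      rintro α ⟨n, lam, fs, hl, hfK, rfl⟩ β ⟨m, mu, gs, hm, hgK, rfl⟩
      set lam' : Fin (n + m) → ℝ := Fin.append lam mu with hlam'
      set fs' : Fin (n + m) → X → ℝ := Fin.append fs gs with hfs'
      have hl' : ∀ k, 0 ≤ lam' k := by
        intro k
        refine Fin.addCases (fun i => ?_) (fun i => ?_) k
        · simp [hlam', Fin.append_left]; exact hl i
        · simp [hlam', Fin.append_right]; exact hm i
      have hfK' : ∀ k, fs' k ∈ 𝒦 := by
        intro k
        refine Fin.addCases (fun i => ?_) (fun i => ?_) k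
        · simp only [hfs', Fin.append_left]; exact hfK i
        · simp only [hfs', Fin.append_right]; exact hgK i
      have hmem : (⨅ x : X, ((f + g) x - ∑ k, lam' k * (fs' k x - L (fs' k))))
          ∈ NESet 𝒦 L (f + g) := ⟨n + m, lam', fs', hl', hfK', rfl⟩
      refine le_trans ?_ (hmem_le (f + g) (isGamble_add hf hg) _ hmem)
      refine le_ciInf fun x => ?_
      have hintf := isGamble_integrand hf lam fs (fun k => h𝒦g _ (hfK k)) (fun k => L (fs k))
      have hintg := isGamble_integrand hg mu gs (fun k => h𝒦g _ (hgK k)) (fun k => L (gs k))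
      have h1 : (⨅ y : X, (f y - ∑ k, lam k * (fs k y - L (fs k))))
          ≤ f x - ∑ k, lam k * (fs k x - L (fs k)) := ciInf_le hintf.2 x
      have h2 : (⨅ y : X, (g y - ∑ k, mu k * (gs k y - L (gs k))))
          ≤ g x - ∑ k, mu k * (gs k x - L (gs k)) := ciInf_le hintg.2 x
      have hsum : ∑ k, lam' k * (fs' k x - L (fs' k)) =
          (∑ k, lam k * (fs k x - L (fs k))) + ∑ k, mu k * (gs k x - L (gs k)) := by
        rw [Fin.sum_univ_add]
        congr 1
        · refine Finset.sum_congr rfl fun i _ => ?_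
          simp [hlam', hfs', Fin.append_left]
        · refine Finset.sum_congr rfl fun i _ => ?_
          simp [hlam', hfs', Fin.append_right]
      have : (f + g) x = f x + g x := rfl
      rw [hsum, this]
      linarith
    have h2 : NatExt 𝒦 L f ≤ NatExt 𝒦 L (f + g) - NatExt 𝒦 L g := by
      rw [natExt_eq 𝒦 L f]
      refine csSup_le (hne f) fun α hα => ?_
      have h3 : NatExt 𝒦 L g ≤ NatExt 𝒦 L (f + g) - α := by
        rw [natExt_eq 𝒦 L g]
        refine csSup_le (hne g) fun β hβ => ?_
        linarith [key α hα β hβ]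
      linarith
    linarith
  -- homogeneity
  have smul_le : ∀ (c : ℝ), 0 < c → ∀ f : X → ℝ, IsGamble f →
      c * NatExt 𝒦 L f ≤ NatExt 𝒦 L (c • f) := by
    intro c hc f hf
    have key : ∀ α ∈ NESet 𝒦 L f, c * α ≤ NatExt 𝒦 L (c • f) := by
      rintro α ⟨n, lam, fs, hl, hfK, rfl⟩
      have hmem : (⨅ x : X, ((c • f) x - ∑ k, (c * lam k) * (fs k x - L (fs k))))
          ∈ NESet 𝒦 L (c • f) :=
        ⟨n, fun k => c * lam k, fs, fun k => mul_nonneg hc.le (hl k), hfK, rfl⟩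
      refine le_trans (le_of_eq ?_) (hmem_le (c • f) (isGamble_smul c hf) _ hmem)
      rw [Real.mul_iInf_of_nonneg hc.le]
      refine congrArg _ (funext fun x => ?_)
      rw [Pi.smul_apply, smul_eq_mul, mul_sub, Finset.mul_sum]
      congr 1
      exact Finset.sum_congr rfl fun k _ => by ring
    rw [natExt_eq 𝒦 L f]
    have : NatExt 𝒦 L f ≤ NatExt 𝒦 L (c • f) / c := by
      refine csSup_le (hne f) fun α hα => ?_
      have := key α hα
      rw [le_div_iff₀ hc]
      linarith
    calc c * NatExt 𝒦 L f = c * sSup (NESet 𝒦 L f) := rfl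
      _ ≤ c * (NatExt 𝒦 L (c • f) / c) := by
          refine mul_le_mul_of_nonneg_left ?_ hc.le
          rw [← natExt_eq]; exact this
      _ = NatExt 𝒦 L (c • f) := by field_simp
  have natext_zero : NatExt 𝒦 L (0 : X → ℝ) = 0 := by
    have hub : NatExt 𝒦 L (0 : X → ℝ) ≤ 0 := by
      rw [natExt_eq]
      refine csSup_le (hne 0) fun α hα => ?_
      have hg0 : IsGamble (0 : X → ℝ) := by
        rw [isGamble_iff]; exact ⟨0, by simp⟩
      have h := NESet_le h𝒦g hasl hg0 hα
      have hr : sSup (range (0 : X → ℝ)) = 0 := by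
        have he : (range (0 : X → ℝ)) = {0} := by ext y; simp [eq_comm]
        rw [he, csSup_singleton]
      rw [hr] at h; exact h
    have hlb : (0 : ℝ) ≤ NatExt 𝒦 L (0 : X → ℝ) := by
      have hg0 : IsGamble (0 : X → ℝ) := by
        rw [isGamble_iff]; exact ⟨0, by simp⟩
      have h := coh1 0 hg0
      have hr : sInf (range (0 : X → ℝ)) = 0 := by
        have he : (range (0 : X → ℝ)) = {0} := by ext y; simp [eq_comm]
        rw [he, csInf_singleton]
      rw [hr] at h; exact h
    linarith
  have coh3 : ∀ f : X → ℝ, IsGamble f → ∀ c : ℝ, 0 ≤ c →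
      NatExt 𝒦 L (c • f) = c * NatExt 𝒦 L f := by
    intro f hf c hc
    rcases eq_or_lt_of_le hc with h | h
    · subst h
      rw [zero_smul, zero_mul]
      exact natext_zero
    · have h1 := smul_le c h f hf
      have h2 := smul_le c⁻¹ (inv_pos.2 h) (c • f) (isGamble_smul c hf)
      rw [inv_smul_smul₀ (ne_of_gt h)] at h2
      have : NatExt 𝒦 L (c • f) ≤ c * NatExt 𝒦 L f := by
        have := mul_le_mul_of_nonneg_left h2 h.le
        rw [← mul_assoc, mul_inv_cancel₀ (ne_of_gt h), one_mul] at this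
        linarith
      linarith
  -- Part 4: minimality
  have part4 : ∀ M : (X → ℝ) → ℝ, IsCoherentLowerPrevision M →
      (∀ f : X → ℝ, IsGamble f → ∀ T ∈ 𝒯, M f ≤ M (f ∘ T)) →
      (∀ f ∈ 𝒦, L f ≤ M f) →
      ∀ f : X → ℝ, IsGamble f → NatExt 𝒦 L f ≤ M f := by
    intro M hM hMinv hML f hf
    rw [natExt_eq]
    refine csSup_le (hne f) fun α hα => ?_
    obtain ⟨n, lam, fs, hl, hfK, rfl⟩ := hα
    have hfsg : ∀ k, IsGamble (fs k) := fun k => h𝒦g _ (hfK k)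
    have hint := isGamble_integrand hf lam fs hfsg (fun k => L (fs k))
    set α := ⨅ x : X, (f x - ∑ k, lam k * (fs k x - L (fs k))) with hαdef
    set c : ℝ := ∑ k, lam k * L (fs k) with hcdef
    set g0 : X → ℝ := (fun _ => α - c) + ∑ k, lam k • fs k with hg0
    have hg0g : IsGamble g0 :=
      isGamble_add (isGamble_const _) (isGamble_sum (fun k => isGamble_smul _ (hfsg k)) _)
    have hg0le : ∀ x, g0 x ≤ f x := by
      intro x
      have h1 : α ≤ f x - ∑ k, lam k * (fs k x - L (fs k)) := ciInf_le hint.2 x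
      have hsplit : ∑ k, lam k * (fs k x - L (fs k))
          = (∑ k, lam k * fs k x) - c := by
        rw [hcdef, ← Finset.sum_sub_distrib]
        exact Finset.sum_congr rfl fun k _ => by ring
      have hg0x : g0 x = α - c + ∑ k, lam k * fs k x := by
        simp only [hg0, Pi.add_apply, Finset.sum_apply, Pi.smul_apply, smul_eq_mul]
      rw [hg0x]
      rw [hsplit] at h1
      linarith
    obtain ⟨hM1, hM2, hM3⟩ := hM
    -- M g0 ≥ α
    have hMg0 : α ≤ M g0 := by
      have hs := clp_sum_le ⟨hM1, hM2, hM3⟩ lam fs hl hfsg Finset.univ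
      have hconst : (α - c : ℝ) ≤ M (fun _ : X => α - c) := by
        have := hM1 (fun _ : X => α - c) (isGamble_const _)
        rwa [sInf_range_const] at this
      have hadd := hM2 (fun _ : X => α - c) (∑ k, lam k • fs k) (isGamble_const _)
        (isGamble_sum (fun k => isGamble_smul _ (hfsg k)) _)
      have hsumM : c ≤ M (∑ k, lam k • fs k) := by
        refine le_trans ?_ hs
        rw [hcdef]
        exact Finset.sum_le_sum fun k _ =>
          mul_le_mul_of_nonneg_left (hML _ (hfK k)) (hl k)
      calc α = (α - c) + c := by ring
        _ ≤ M (fun _ : X => α - c) + M (∑ k, lam k • fs k) := add_le_add hconst hsumM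
        _ ≤ M ((fun _ : X => α - c) + ∑ k, lam k • fs k) := hadd
        _ = M g0 := rfl
    -- M f ≥ M g0
    have hmono : M g0 ≤ M f := by
      have hfg : IsGamble (f - g0) := isGamble_sub hf hg0g
      have hadd := hM2 g0 (f - g0) hg0g hfg
      have hpos : (0 : ℝ) ≤ M (f - g0) := by
        have h1 := hM1 (f - g0) hfg
        have h2 : (0 : ℝ) ≤ sInf (range (f - g0)) := by
          refine Real.sInf_nonneg ?_
          rintro y ⟨x, rfl⟩
          have := hg0le x
          simp only [Pi.sub_apply]
          linarith
        linarith
      have : g0 + (f - g0) = f := by ring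
      rw [this] at hadd
      linarith
    linarith
  exact ⟨part1, ⟨coh1, coh2, coh3⟩, part3, part4⟩
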